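/- Let A_c be an n×n real matrix, B₁ an n×l real matrix, C_c a q×n real matrix, γ > 0, and let P be a real symmetric positive definite n×n matrix satisfying A_cᵀP + PA_c + γ⁻²·PB₁B₁ᵀP + C_cᵀC_c ⪯ 0. If the pair (A_c, C_c) is observable, then A_c is Hurwitz, i.e., every eigenvalue λ ∈ ℂ of (the complexification of) A_c satisfies Re λ < 0. -/

import Mathlib

open Matrix

/-- The pair `(A, C)` is observable: no (complex) eigenvector of `A` lies in the kernel of `C`. -/
def IsObservablePair {n q : ℕ} (A : Matrix (Fin n) (Fin n) ℝ) (C : Matrix (Fin q) (Fin n) ℝ) :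
    Prop :=
  ∀ (lam : ℂ) (v : Fin n → ℂ), v ≠ 0 → (A.map Complex.ofReal).mulVec v = lam • v →
    (C.map Complex.ofReal).mulVec v ≠ 0

/-- A real square matrix is Hurwitz if every eigenvalue of its complexification has negative
real part. -/
def IsHurwitz {n : ℕ} (M : Matrix (Fin n) (Fin n) ℝ) : Prop :=
  ∀ (lam : ℂ) (v : Fin n → ℂ), v ≠ 0 → (M.map Complex.ofReal).mulVec v = lam • v → lam.re < 0

lemma quad_re {n : ℕ} (M : Matrix (Fin n) (Fin n) ℝ) (v : Fin n → ℂ) :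
    (star v ⬝ᵥ (M.map Complex.ofReal) *ᵥ v).re =
      (fun i => (v i).re) ⬝ᵥ M *ᵥ (fun i => (v i).re) +
      (fun i => (v i).im) ⬝ᵥ M *ᵥ (fun i => (v i).im) := by
  simp only [dotProduct, mulVec, Matrix.map_apply, Pi.star_apply, Finset.mul_sum,
    Complex.re_sum, ← Finset.sum_add_distrib]
  refine Finset.sum_congr rfl fun i _ => Finset.sum_congr rfl fun j _ => ?_
  simp [Complex.mul_re, Complex.mul_im]

lemma quadR_eq {n q : ℕ} (C : Matrix (Fin q) (Fin n) ℝ) (x : Fin n → ℝ) :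
    x ⬝ᵥ (Cᵀ * C) *ᵥ x = (C *ᵥ x) ⬝ᵥ (C *ᵥ x) := by
  rw [← mulVec_mulVec, dotProduct_mulVec, vecMul_transpose]

/-- If `P ≻ 0` is symmetric and satisfies the Riccati inequality
`AᶜᵀP + PAᶜ + γ⁻²·PB₁B₁ᵀP + CᶜᵀCᶜ ⪯ 0` with `γ > 0`, and `(Aᶜ, Cᶜ)` is observable,
then `Aᶜ` is Hurwitz. -/
theorem stmt_6 (n l q : ℕ) (Ac : Matrix (Fin n) (Fin n) ℝ) (B₁ : Matrix (Fin n) (Fin l) ℝ)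
    (Cc : Matrix (Fin q) (Fin n) ℝ) (γ : ℝ) (hγ : 0 < γ)
    (P : Matrix (Fin n) (Fin n) ℝ) (hPsymm : P.IsSymm) (hP : P.PosDef)
    (hRic : (-(Acᵀ * P + P * Ac + (γ ^ 2)⁻¹ • (P * B₁ * B₁ᵀ * P) + Ccᵀ * Cc)).PosSemidef)
    (hObs : IsObservablePair Ac Cc) :
    IsHurwitz Ac := by
  intro lam v hv hev
  classical
  set x : Fin n → ℝ := fun i => (v i).re with hxdef
  set y : Fin n → ℝ := fun i => (v i).im with hydef
  set c : ℝ := (γ ^ 2)⁻¹ with hcdef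
  have hc : 0 < c := by positivity
  have hxy : x ≠ 0 ∨ y ≠ 0 := by
    by_contra h
    push_neg at h
    exact hv (funext fun i => Complex.ext
      (by simpa using congrFun h.1 i) (by simpa using congrFun h.2 i))
  -- positivity of the P quadratic form
  have hQP : 0 < (star v ⬝ᵥ (P.map Complex.ofReal) *ᵥ v).re := by
    rw [quad_re]
    rcases hxy with h | h
    · exact add_pos_of_pos_of_nonneg (by simpa using hP.dotProduct_mulVec_pos h)
        (by simpa using hP.posSemidef.dotProduct_mulVec_nonneg y)
    · exact add_pos_of_nonneg_of_pos (by simpa using hP.posSemidef.dotProduct_mulVec_nonneg x)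
        (by simpa using hP.dotProduct_mulVec_pos h)
  -- the complexified eigen-relation gives the cross terms
  have hmapmul : ∀ (X Y : Matrix (Fin n) (Fin n) ℝ),
      (X * Y).map Complex.ofReal = X.map Complex.ofReal * Y.map Complex.ofReal := by
    intro X Y
    exact Matrix.map_mul (f := Complex.ofRealHom)
  have hQPA : (star v ⬝ᵥ ((P * Ac).map Complex.ofReal) *ᵥ v) =
      lam * (star v ⬝ᵥ (P.map Complex.ofReal) *ᵥ v) := by
    rw [hmapmul, ← mulVec_mulVec, hev, mulVec_smul, dotProduct_smul, smul_eq_mul]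
  have hQAP : (star v ⬝ᵥ ((Acᵀ * P).map Complex.ofReal) *ᵥ v) =
      (starRingEnd ℂ) lam * (star v ⬝ᵥ (P.map Complex.ofReal) *ᵥ v) := by
    have ht : (Acᵀ).map Complex.ofReal = (Ac.map Complex.ofReal)ᵀ := Matrix.transpose_map
    have hstar : Ac.map Complex.ofReal *ᵥ star v = star (Ac.map Complex.ofReal *ᵥ v) := by
      funext i
      simp [mulVec, dotProduct, Matrix.map_apply, star_sum]
    rw [hmapmul, ht, ← mulVec_mulVec, dotProduct_mulVec, vecMul_transpose, hstar, hev,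
      star_smul, smul_dotProduct, smul_eq_mul]
    rfl
  -- real quadratic form of the Riccati matrix is ≤ 0 on x and y
  set M : Matrix (Fin n) (Fin n) ℝ :=
    Acᵀ * P + P * Ac + c • (P * B₁ * B₁ᵀ * P) + Ccᵀ * Cc with hMdef
  have hM : ∀ z : Fin n → ℝ, z ⬝ᵥ M *ᵥ z ≤ 0 := by
    intro z
    have := hRic.dotProduct_mulVec_nonneg z
    simp only [star_trivial, neg_mulVec, dotProduct_neg] at this
    linarith
  -- nonnegativity of the B₁ term
  have hSpsd : (P * B₁ * B₁ᵀ * P).PosSemidef := by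
    have h1 : P * B₁ * B₁ᵀ * P = (B₁ᵀ * P)ᴴ * (B₁ᵀ * P) := by
      have hc2 : (B₁ᵀ * P)ᴴ = P * B₁ := by
        rw [conjTranspose_eq_transpose_of_trivial, transpose_mul, transpose_transpose,
          hPsymm.eq]
      rw [hc2, Matrix.mul_assoc]
    rw [h1]
    exact posSemidef_conjTranspose_mul_self _
  have hS : ∀ z : Fin n → ℝ, 0 ≤ z ⬝ᵥ (P * B₁ * B₁ᵀ * P) *ᵥ z := by
    intro z; simpa using hSpsd.dotProduct_mulVec_nonneg z
  -- strict positivity of the observation term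
  have hw : (Cc.map Complex.ofReal) *ᵥ v ≠ 0 := hObs lam v hv hev
  have hCre : ∀ i, (((Cc.map Complex.ofReal) *ᵥ v) i).re = (Cc *ᵥ x) i ∧
      (((Cc.map Complex.ofReal) *ᵥ v) i).im = (Cc *ᵥ y) i := by
    intro i
    constructor <;> simp [mulVec, dotProduct, Matrix.map_apply, Complex.re_sum, Complex.im_sum, hxdef, hydef]
  have hCxy : Cc *ᵥ x ≠ 0 ∨ Cc *ᵥ y ≠ 0 := by
    by_contra h
    push_neg at h
    apply hw
    funext i
    refine Complex.ext ?_ ?_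
    · rw [(hCre i).1, h.1]; rfl
    · rw [(hCre i).2, h.2]; rfl
  have hds : ∀ w : Fin q → ℝ, 0 ≤ w ⬝ᵥ w := fun w =>
    Finset.sum_nonneg fun i _ => mul_self_nonneg _
  have hCpos : 0 < x ⬝ᵥ (Ccᵀ * Cc) *ᵥ x + y ⬝ᵥ (Ccᵀ * Cc) *ᵥ y := by
    rw [quadR_eq, quadR_eq]
    rcases hCxy with h | h
    · have h2 : 0 < (Cc *ᵥ x) ⬝ᵥ (Cc *ᵥ x) :=
        (hds _).lt_of_ne fun h1 => h (dotProduct_self_eq_zero.mp h1.symm)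
      nlinarith [hds (Cc *ᵥ y)]
    · have h2 : 0 < (Cc *ᵥ y) ⬝ᵥ (Cc *ᵥ y) :=
        (hds _).lt_of_ne fun h1 => h (dotProduct_self_eq_zero.mp h1.symm)
      nlinarith [hds (Cc *ᵥ x)]
  -- expand the quadratic form of M
  have hexpand : ∀ z : Fin n → ℝ, z ⬝ᵥ M *ᵥ z =
      z ⬝ᵥ (Acᵀ * P) *ᵥ z + z ⬝ᵥ (P * Ac) *ᵥ z + c * (z ⬝ᵥ (P * B₁ * B₁ᵀ * P) *ᵥ z)
        + z ⬝ᵥ (Ccᵀ * Cc) *ᵥ z := by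
    intro z
    simp [hMdef, add_mulVec, smul_mulVec, dotProduct_add, dotProduct_smul, smul_eq_mul]
  -- combine via quad_re
  have hcross : x ⬝ᵥ (Acᵀ * P) *ᵥ x + y ⬝ᵥ (Acᵀ * P) *ᵥ y
      + (x ⬝ᵥ (P * Ac) *ᵥ x + y ⬝ᵥ (P * Ac) *ᵥ y)
      = 2 * lam.re * (star v ⬝ᵥ (P.map Complex.ofReal) *ᵥ v).re := by
    rw [← quad_re, ← quad_re, hQAP, hQPA, ← Complex.add_re]
    have : (starRingEnd ℂ) lam * (star v ⬝ᵥ (P.map Complex.ofReal) *ᵥ v)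
        + lam * (star v ⬝ᵥ (P.map Complex.ofReal) *ᵥ v)
        = ((2 * lam.re : ℝ) : ℂ) * (star v ⬝ᵥ (P.map Complex.ofReal) *ᵥ v) := by
      rw [← add_mul]
      congr 1
      rw [add_comm]
      exact Complex.add_conj lam
    rw [this]
    simp [Complex.mul_re]
  have hMx := hM x
  have hMy := hM y
  rw [hexpand] at hMx hMy
  have hfinal : 2 * lam.re * (star v ⬝ᵥ (P.map Complex.ofReal) *ᵥ v).re
      + c * (x ⬝ᵥ (P * B₁ * B₁ᵀ * P) *ᵥ x + y ⬝ᵥ (P * B₁ * B₁ᵀ * P) *ᵥ y)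
      + (x ⬝ᵥ (Ccᵀ * Cc) *ᵥ x + y ⬝ᵥ (Ccᵀ * Cc) *ᵥ y) ≤ 0 := by
    rw [← hcross]; linarith
  nlinarith [hQP, hCpos, mul_nonneg hc.le (add_nonneg (hS x) (hS y)), hfinal]
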